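/- Suppose C is countably extensive with pullback-stable strong epimorphisms (and has (strong epi, mono) factorizations). Then for every morphism f : X → Y, the inverse-image map f⁻¹[−] : Pred_Y(C) → Pred_X(C) preserves countable joins of subobjects. -/

import Mathlib

open CategoryTheory CategoryTheory.Limits

universe v u

variable {C : Type u} [Category.{v} C]

/-- The canonical functor `∏ₙ C/Xₙ ⥤ C/∐ₙ Xₙ` taking countable coproducts of morphisms;
`C` is countably extensive if this is an equivalence for every countable family. -/
noncomputable def countExtFunctor [HasCountableCoproducts C] (X : ℕ → C) :
    (∀ n : ℕ, Over (X n)) ⥤ Over (∐ X) where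
  obj p := Over.mk (Limits.Sigma.map fun n => (p n).hom)
  map {p q} f := Over.homMk (Limits.Sigma.map fun n => (f n).left) (by dsimp; apply Limits.Sigma.hom_ext; intro n; simp)

/-- The `SupSet` structure on subobjects, with the universe of well-poweredness pinned to `v`
(as `WellPowered C` meant in the original library). -/
noncomputable instance subobjectSupSetOfWellPowered [WellPowered.{v} C] [HasCoproducts.{v} C]
    [HasImages C] {B : C} : SupSet (Subobject B) :=
  (Subobject.completeSemilatticeSup.{v} (B := B)).toSupSet

lemma aux_pullback_obj_mk [HasPullbacks C] {A X Y : C} (m : A ⟶ Y) [Mono m] (f : X ⟶ Y) :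
    (Subobject.pullback f).obj (Subobject.mk m) = Subobject.mk (pullback.snd m f) := rfl

/-- If `C` is countably extensive with pullback-stable strong epimorphisms, then inverse
image along any morphism preserves countable joins of subobjects. -/
theorem pullback_preserves_countable_joins
    [WellPowered.{v} C] [HasPullbacks C] [HasCoproducts.{v} C] [HasCountableCoproducts C]
    [HasStrongEpiMonoFactorisations C]
    (hext : ∀ X : ℕ → C, (countExtFunctor X).IsEquivalence)
    (hstab : ∀ {P X Y Z : C} (fst : P ⟶ X) (snd : P ⟶ Y) (f : X ⟶ Z) (g : Y ⟶ Z),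
      IsPullback fst snd f g → StrongEpi g → StrongEpi fst)
    {X Y : C} (f : X ⟶ Y) (P : ℕ → Subobject Y) :
    (Subobject.pullback f).obj (⨆ n, P n) = ⨆ n, (Subobject.pullback f).obj (P n) := by
  have le_iSup' : ∀ {W : C} (Q : ℕ → Subobject W) (n : ℕ), Q n ≤ ⨆ m, Q m :=
    fun Q n => @le_sSup _ Subobject.completeSemilatticeSup.{v} _ _ ⟨n, rfl⟩
  have iSup_le' : ∀ {W : C} (Q : ℕ → Subobject W) (R : Subobject W),
      (∀ n, Q n ≤ R) → (⨆ m, Q m) ≤ R :=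
    fun Q R h => @sSup_le _ Subobject.completeSemilatticeSup.{v} _ _ (by rintro _ ⟨n, rfl⟩; exact h n)
  refine le_antisymm ?_
    (iSup_le' _ _ fun n => (Subobject.pullback f).monotone (le_iSup' P n))
  -- the coproduct of the subobjects and the induced map to `Y`
  set E : ℕ → C := fun n => ((P n : C) : C) with hE
  set g : ∐ E ⟶ Y := Sigma.desc fun n => (P n).arrow with hg
  -- the join is the image of `g`
  have hA : (⨆ n, P n) = Subobject.mk (image.ι g) := by
    apply le_antisymm
    · refine iSup_le' _ _ fun n => Subobject.le_mk_of_comm (Sigma.ι E n ≫ factorThruImage g) ?_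
      simp [hg]
    · exact Subobject.mk_le_of_comm
        (image.lift ⟨((⨆ n, P n : Subobject Y) : C), (⨆ n, P n).arrow,
          Sigma.desc fun n => Subobject.ofLE (P n) (⨆ n, P n) (le_iSup' P n),
          by apply Sigma.hom_ext; intro n; simp [hg]; erw [Sigma.ι_desc]⟩)
        (image.lift_fac _)
  rw [hA, aux_pullback_obj_mk]
  -- the big pullback
  set Z : C := pullback g f with hZ
  set e : ∐ E ⟶ image g := factorThruImage g with he
  -- the comparison map to the pullback of the image
  set k : Z ⟶ pullback (image.ι g) f :=
    pullback.lift (pullback.fst g f ≫ e) (pullback.snd g f)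
      (by rw [Category.assoc, image.fac, pullback.condition]) with hk
  have hkPB : IsPullback k (pullback.fst g f) (pullback.fst (image.ι g) f) e := by
    refine IsPullback.of_right ?_ (pullback.lift_fst _ _ _)
      (IsPullback.of_hasPullback (image.ι g) f).flip
    rw [pullback.lift_snd]
    have : e ≫ image.ι g = g := image.fac g
    rw [this]
    exact (IsPullback.of_hasPullback g f).flip
  have hsek : StrongEpi k := hstab _ _ _ _ hkPB inferInstance
  -- extensivity: decompose `pullback.fst g f : Z ⟶ ∐ E`
  have : (countExtFunctor E).EssSurj := (hext E).essSurj
  obtain ⟨p, ⟨φ⟩⟩ : ∃ p, Nonempty ((countExtFunctor E).obj p ≅ Over.mk (pullback.fst g f)) :=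
    ⟨_, ⟨(countExtFunctor E).objObjPreimageIso (Over.mk (pullback.fst g f))⟩⟩
  have hφ : φ.hom.left ≫ pullback.fst g f = Limits.Sigma.map fun n => (p n).hom := by
    simpa [countExtFunctor] using Over.w φ.hom
  -- each component factors through the corresponding pulled-back subobject
  set M : Subobject X := ⨆ n, (Subobject.pullback f).obj (P n) with hM
  set t : ∀ n, (p n).left ⟶ X :=
    fun n => Sigma.ι (fun n => (p n).left) n ≫ φ.hom.left ≫ pullback.snd g f with ht
  have htf : ∀ n, t n ≫ f = (p n).hom ≫ (P n).arrow := by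
    intro n
    have h1 : pullback.snd g f ≫ f = pullback.fst g f ≫ g := pullback.condition.symm
    have h4 : (φ.hom.left ≫ pullback.snd g f) ≫ f = (Limits.Sigma.map fun n => (p n).hom) ≫ g := by
      rw [Category.assoc, h1, ← Category.assoc, hφ]; rfl
    rw [ht]
    exact (Category.assoc _ _ _).trans ((congrArg (Sigma.ι (fun n => (p n).left) n ≫ ·) h4).trans (by simp [hg] : Sigma.ι (fun n => (p n).left) n ≫ (Limits.Sigma.map fun n => (p n).hom) ≫ g = (p n).hom ≫ (P n).arrow))
  have hfac : ∀ n, M.Factors (t n) := by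
    intro n
    refine Subobject.factors_of_le _ (le_iSup' (fun n => (Subobject.pullback f).obj (P n)) n) ?_
    rw [← Subobject.mk_arrow (P n), aux_pullback_obj_mk]
    exact ⟨pullback.lift (p n).hom (t n) (htf n).symm, pullback.lift_snd _ _ _⟩
  set u : ∀ n, (p n).left ⟶ (M : C) := fun n => M.factorThru (t n) (hfac n) with hu
  -- assemble a morphism `Z ⟶ M` over `X`
  set v : Z ⟶ (M : C) := φ.inv.left ≫ Sigma.desc u with hv
  have hvM : v ≫ M.arrow = pullback.snd g f := by
    have h2 : Sigma.desc u ≫ M.arrow = φ.hom.left ≫ pullback.snd g f := by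
      apply Sigma.hom_ext; intro n
      simp [hu, ht]
      rfl
    have h3 : φ.inv.left ≫ φ.hom.left = 𝟙 Z := by
      have := congrArg CommaMorphism.left φ.inv_hom_id
      rw [← Over.comp_left, φ.inv_hom_id]; rfl
    rw [hv]
    exact (Category.assoc _ _ _).trans ((congrArg (φ.inv.left ≫ ·) h2).trans (by rw [← Category.assoc, h3]; exact Category.id_comp _))
  -- lift against the strong epi `k`
  have sq : CommSq v k M.arrow (pullback.snd (image.ι g) f) := by
    constructor
    rw [hvM, hk, pullback.lift_snd]
  exact Subobject.mk_le_of_comm (sq.lift) sq.fac_right
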